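/- Let λ > 0 and let (ξ_n)_{n≥1} be an i.i.d. sequence of real random variables on a probability space (Ω, 𝓕, ℙ), each exponentially distributed with rate λ. Set T_n = ξ_1 + ⋯ + ξ_n. Then for every t ≥ 0 the random variable N_t = #{n ≥ 1 : T_n ≤ t} is almost surely finite and has Poisson distribution with parameter λt, i.e. ℙ(N_t = m) = e^{−λt} (λt)^m / m! for every m ∈ ℕ. -/

import Mathlib

open MeasureTheory ProbabilityTheory

open scoped ENNReal
open Set

lemma map_add_prod_withDensity (f h : ℝ → ℝ≥0∞) (hf : Measurable f) (hh : Measurable h) :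
    Measure.map (fun p : ℝ × ℝ => p.1 + p.2)
      ((volume.withDensity f).prod (volume.withDensity h))
      = volume.withDensity (fun z => ∫⁻ x, f x * h (z - x)) := by
  have hconv : Measurable (fun z => ∫⁻ x, f x * h (z - x)) := by
    apply Measurable.lintegral_prod_right
    exact (hf.comp measurable_snd).mul (hh.comp (measurable_fst.sub measurable_snd))
  ext s hs
  rw [Measure.map_apply (show Measurable (fun p : ℝ × ℝ => p.1 + p.2) from
      measurable_fst.add measurable_snd) hs,
    Measure.prod_apply ((show Measurable (fun p : ℝ × ℝ => p.1 + p.2) from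
      measurable_fst.add measurable_snd) hs),
    withDensity_apply _ hs]
  rw [lintegral_withDensity_eq_lintegral_mul _ hf
    (measurable_measure_prodMk_left ((show Measurable (fun p : ℝ × ℝ => p.1 + p.2) from
      measurable_fst.add measurable_snd) hs))]
  have inner : ∀ x : ℝ, (volume.withDensity h) (Prod.mk x ⁻¹' ((fun p : ℝ × ℝ => p.1 + p.2) ⁻¹' s))
      = ∫⁻ z, s.indicator 1 z * h (z - x) := by
    intro x
    have : Prod.mk x ⁻¹' ((fun p : ℝ × ℝ => p.1 + p.2) ⁻¹' s) = {y | x + y ∈ s} := rfl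
    rw [this, withDensity_apply' h]
    have : ∀ y, ({y | x + y ∈ s}.indicator h) y = (fun w => s.indicator 1 w * h (w - x)) (x + y) := by
      intro y
      simp only [indicator, mem_setOf_eq, add_sub_cancel_left]
      by_cases hy : x + y ∈ s <;> simp [hy]
    have hms : MeasurableSet {y : ℝ | x + y ∈ s} := (measurable_const_add x) hs
    rw [← lintegral_indicator hms, lintegral_congr this,
      lintegral_add_left_eq_self (fun w => s.indicator 1 w * h (w - x)) x]
  simp_rw [inner]
  have hind : Measurable (s.indicator (1 : ℝ → ℝ≥0∞)) := measurable_one.indicator hs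
  have hker : Measurable (Function.uncurry fun x z => f x * (s.indicator 1 z * h (z - x))) := by
    apply Measurable.mul (hf.comp measurable_fst)
    apply Measurable.mul
    · exact Measurable.comp hind measurable_snd
    · exact hh.comp (measurable_snd.sub measurable_fst)
  calc ∫⁻ x, f x * ∫⁻ z, s.indicator 1 z * h (z - x)
      = ∫⁻ x, ∫⁻ z, f x * (s.indicator 1 z * h (z - x)) := by
        refine lintegral_congr fun x => ?_
        exact (lintegral_const_mul (f x)
          (hind.mul (hh.comp (measurable_id.sub measurable_const)))).symm
    _ = ∫⁻ z, ∫⁻ x, f x * (s.indicator 1 z * h (z - x)) := by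
        rw [lintegral_lintegral_swap hker.aemeasurable]
    _ = ∫⁻ z, s.indicator (fun w => ∫⁻ x, f x * h (w - x)) z := by
        refine lintegral_congr fun z => ?_
        by_cases hz : z ∈ s
        · simp only [indicator_of_mem hz, Pi.one_apply, one_mul]
        · simp [indicator_of_notMem hz]
    _ = ∫⁻ z in s, ∫⁻ x, f x * h (z - x) := lintegral_indicator hs _
noncomputable def g (l : ℝ) (k : ℕ) (x : ℝ) : ℝ≥0∞ :=
  ENNReal.ofReal (if 0 ≤ x then l ^ k * x ^ (k - 1) * Real.exp (-(l * x)) / (k-1).factorial else 0)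

lemma g_meas (l : ℝ) (k : ℕ) : Measurable (g l k) := by
  unfold g
  apply Measurable.ennreal_ofReal
  apply Measurable.ite measurableSet_Ici _ measurable_const
  fun_prop

lemma lint_pow (k : ℕ) {z c : ℝ} (hz : 0 ≤ z) (hc : 0 ≤ c) :
    ∫⁻ x in Icc 0 z, ENNReal.ofReal (c * x ^ k) = ENNReal.ofReal (c * z ^ (k+1) / (k+1)) := by
  rw [setLIntegral_congr (Filter.EventuallyEq.symm Ioc_ae_eq_Icc)]
  rw [← MeasureTheory.ofReal_integral_eq_lintegral_ofReal]
  · rw [← intervalIntegral.integral_of_le hz]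
    congr 1
    rw [intervalIntegral.integral_const_mul, integral_pow]
    rw [zero_pow (Nat.succ_ne_zero k)]
    ring
  · exact (continuous_const.mul (continuous_pow k)).integrableOn_Ioc
  · filter_upwards [self_mem_ae_restrict measurableSet_Ioc] with x hx
    exact mul_nonneg hc (pow_nonneg (le_of_lt hx.1) k)

lemma conv_g {l : ℝ} (hl : 0 < l) (k : ℕ) :
    (fun z => ∫⁻ x, g l (k+1) x * g l 1 (z - x)) = g l (k+2) := by
  funext z
  by_cases hz : 0 ≤ z
  · have hrep : (fun x => g l (k+1) x * g l 1 (z - x)) =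
        (Icc 0 z).indicator (fun x =>
          ENNReal.ofReal ((l^(k+2) * Real.exp (-(l*z)) / k.factorial) * x ^ k)) := by
      funext x
      unfold g
      by_cases h1 : 0 ≤ x
      · by_cases h2 : x ≤ z
        · rw [if_pos h1, if_pos (by linarith : (0:ℝ) ≤ z - x),
            indicator_of_mem (Set.mem_Icc.mpr ⟨h1, h2⟩)]
          rw [← ENNReal.ofReal_mul (by positivity)]
          congr 1
          have hexp : Real.exp (-(l*x)) * Real.exp (-(l*(z-x))) = Real.exp (-(l*z)) := by
            rw [← Real.exp_add]; ring_nf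
          simp only [show k+1-1 = k by omega, show 1-1 = 0 by rfl, pow_one, pow_zero,
            Nat.factorial_zero, Nat.cast_one, div_one, one_mul]
          rw [show l^(k+2) = l^(k+1) * l by ring, ← hexp]
          ring
        · rw [indicator_of_notMem (by simp [h2] : x ∉ Icc 0 z)]
          rw [if_neg (by linarith : ¬ (0:ℝ) ≤ z - x)]
          simp
      · rw [indicator_of_notMem (by simp [h1] : x ∉ Icc 0 z), if_neg h1]
        simp
    rw [hrep, lintegral_indicator measurableSet_Icc, lint_pow k hz (by positivity)]
    unfold g
    rw [if_pos hz]
    congr 1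
    simp only [show k+2-1 = k+1 by omega]
    rw [Nat.factorial_succ]
    push_cast
    field_simp
  · have h0 : ∀ x, g l (k+1) x * g l 1 (z - x) = 0 := by
      intro x
      unfold g
      by_cases h1 : 0 ≤ x
      · rw [if_neg (by push_neg at hz; intro h; linarith : ¬ (0:ℝ) ≤ z - x)]; simp
      · rw [if_neg h1]; simp
    rw [lintegral_congr h0, lintegral_zero]
    unfold g
    rw [if_neg hz]
    simp

lemma tail_g {l : ℝ} (hl : 0 < l) {s : ℝ} (hs : 0 ≤ s) :
    volume.withDensity (g l 1) (Ioi s) = ENNReal.ofReal (Real.exp (-(l * s))) := by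
  rw [withDensity_apply _ measurableSet_Ioi]
  have hcong : ∀ x ∈ Ioi s, g l 1 x = ENNReal.ofReal (l * Real.exp (-(l * x))) := by
    intro x hx
    unfold g
    rw [if_pos (le_trans hs (le_of_lt hx))]
    norm_num
  have hint : IntegrableOn (fun x => l * Real.exp (-(l * x))) (Ioi s) := by
    simpa [neg_mul, IntegrableOn] using ((exp_neg_integrableOn_Ioi s hl).const_mul l)
  rw [setLIntegral_congr_fun measurableSet_Ioi hcong,
    ← ofReal_integral_eq_lintegral_ofReal hint (ae_of_all _ fun x => by positivity)]
  congr 1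
  have hderiv : ∀ x ∈ Ici s, HasDerivAt (fun x => -Real.exp (-(l * x)))
      (l * Real.exp (-(l * x))) x := by
    intro x _
    have h1 : HasDerivAt (fun x : ℝ => -(l * x)) (-l) x := by
      simpa [Pi.neg_def] using ((hasDerivAt_id x).const_mul l).neg
    have h2 := (h1.exp).neg
    simp only [Pi.neg_def] at h2
    rw [show l * Real.exp (-(l * x)) = -(Real.exp (-(l * x)) * -l) by ring]
    exact h2
  have htend : Filter.Tendsto (fun x => -Real.exp (-(l * x))) Filter.atTop (nhds 0) := by
    rw [show (0:ℝ) = -0 by ring]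
    apply Filter.Tendsto.neg
    apply Real.tendsto_exp_atBot.comp
    exact Filter.tendsto_neg_atTop_atBot.comp (Filter.Tendsto.const_mul_atTop hl Filter.tendsto_id)
  rw [integral_Ioi_of_hasDerivAt_of_tendsto' hderiv hint htend]
  ring

section Main

variable {l : ℝ} {Ω : Type*} [MeasurableSpace Ω] {μ : Measure Ω} [IsProbabilityMeasure μ]
  {ξ : ℕ → Ω → ℝ}

lemma expDensity_eq_g (l : ℝ) :
    (fun x => ENNReal.ofReal (if 0 ≤ x then l * Real.exp (-(l * x)) else 0)) = g l 1 := by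
  funext x
  unfold g
  norm_num

lemma law_T (hl : 0 < l) (hmeas : ∀ n, Measurable (ξ n))
    (hindep : iIndepFun ξ μ)
    (hlaw : ∀ n, Measure.map (ξ n) μ =
      MeasureTheory.volume.withDensity
        (fun x => ENNReal.ofReal (if 0 ≤ x then l * Real.exp (-(l * x)) else 0))) :
    ∀ m : ℕ, Measure.map (fun ω => ∑ i ∈ Finset.range (m+1), ξ i ω) μ
      = volume.withDensity (g l (m+1)) := by
  have hsum_meas : ∀ n : ℕ, Measurable (fun ω => ∑ i ∈ Finset.range n, ξ i ω) :=
    fun n => Finset.measurable_sum _ (fun i _ => hmeas i)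
  intro m
  induction m with
  | zero =>
      have : (fun ω => ∑ i ∈ Finset.range 1, ξ i ω) = ξ 0 := by
        funext ω; simp
      rw [this, hlaw 0, expDensity_eq_g]
  | succ m ih =>
      have hind : IndepFun (fun ω => ∑ i ∈ Finset.range (m+1), ξ i ω) (ξ (m+1)) μ := by
        have h := hindep.indepFun_sum_range_succ hmeas (m+1)
        have he : (∑ j ∈ Finset.range (m+1), ξ j) = (fun ω => ∑ i ∈ Finset.range (m+1), ξ i ω) := by
          funext ω; simp [Finset.sum_apply]
        rwa [he] at h
      have hpair := (indepFun_iff_map_prod_eq_prod_map_map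
        ((hsum_meas (m+1)).aemeasurable) ((hmeas (m+1)).aemeasurable)).mp hind
      have hcomp : (fun ω => ∑ i ∈ Finset.range (m+2), ξ i ω)
          = (fun p : ℝ × ℝ => p.1 + p.2) ∘
            (fun ω => ((∑ i ∈ Finset.range (m+1), ξ i ω), ξ (m+1) ω)) := by
        funext ω; simp [Finset.sum_range_succ]
      rw [show m + 1 + 1 = m + 2 from rfl, hcomp,
        ← Measure.map_map (show Measurable (fun p : ℝ × ℝ => p.1 + p.2) from
            measurable_fst.add measurable_snd)
          ((hsum_meas (m+1)).prodMk (hmeas (m+1))),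
        hpair, ih, hlaw (m+1), expDensity_eq_g,
        map_add_prod_withDensity _ _ (g_meas l (m+1)) (g_meas l 1), conv_g hl m]

lemma q_event (hl : 0 < l) (hmeas : ∀ n, Measurable (ξ n))
    (hindep : iIndepFun ξ μ)
    (hlaw : ∀ n, Measure.map (ξ n) μ =
      MeasureTheory.volume.withDensity
        (fun x => ENNReal.ofReal (if 0 ≤ x then l * Real.exp (-(l * x)) else 0)))
    {t : ℝ} (ht : 0 ≤ t) (m : ℕ) :
    μ {ω | ∑ i ∈ Finset.range m, ξ i ω ≤ t ∧ t < ∑ i ∈ Finset.range (m+1), ξ i ω}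
      = ENNReal.ofReal (Real.exp (-(l * t)) * (l * t) ^ m / m.factorial) := by
  have hsum_meas : ∀ n : ℕ, Measurable (fun ω => ∑ i ∈ Finset.range n, ξ i ω) :=
    fun n => Finset.measurable_sum _ (fun i _ => hmeas i)
  match m with
  | 0 =>
      have hset : {ω | ∑ i ∈ Finset.range 0, ξ i ω ≤ t ∧ t < ∑ i ∈ Finset.range 1, ξ i ω}
          = ξ 0 ⁻¹' (Ioi t) := by
        ext ω; simp [ht]
      rw [hset, ← Measure.map_apply (hmeas 0) measurableSet_Ioi, hlaw 0, expDensity_eq_g,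
        tail_g hl ht]
      simp
  | (k+1) =>
      set S : Set (ℝ × ℝ) := {p : ℝ × ℝ | p.1 ≤ t ∧ t < p.1 + p.2} with hS
      have hSmeas : MeasurableSet S :=
        (measurableSet_le measurable_fst measurable_const).inter
          (measurableSet_lt measurable_const (measurable_fst.add measurable_snd))
      have hset : {ω | ∑ i ∈ Finset.range (k+1), ξ i ω ≤ t ∧ t < ∑ i ∈ Finset.range (k+2), ξ i ω}
          = (fun ω => ((∑ i ∈ Finset.range (k+1), ξ i ω), ξ (k+1) ω)) ⁻¹' S := by
        ext ω; simp [hS, Finset.sum_range_succ]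
      have hind : IndepFun (fun ω => ∑ i ∈ Finset.range (k+1), ξ i ω) (ξ (k+1)) μ := by
        have h := hindep.indepFun_sum_range_succ hmeas (k+1)
        have he : (∑ j ∈ Finset.range (k+1), ξ j) = (fun ω => ∑ i ∈ Finset.range (k+1), ξ i ω) := by
          funext ω; simp [Finset.sum_apply]
        rwa [he] at h
      have hpair := (indepFun_iff_map_prod_eq_prod_map_map
        ((hsum_meas (k+1)).aemeasurable) ((hmeas (k+1)).aemeasurable)).mp hind
      rw [hset, ← Measure.map_apply ((hsum_meas (k+1)).prodMk (hmeas (k+1))) hSmeas,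
        hpair, law_T hl hmeas hindep hlaw k, hlaw (k+1), expDensity_eq_g,
        Measure.prod_apply hSmeas]
      have hsect : ∀ x : ℝ, (volume.withDensity (g l 1)) (Prod.mk x ⁻¹' S)
          = (Iic t).indicator (fun x => ENNReal.ofReal (Real.exp (-(l * (t - x))))) x := by
        intro x
        by_cases hx : x ≤ t
        · have : Prod.mk x ⁻¹' S = Ioi (t - x) := by
            ext y
            simp only [hS, mem_preimage, mem_setOf_eq, mem_Ioi]
            constructor
            · rintro ⟨-, h2⟩; linarith
            · intro h; exact ⟨hx, by linarith⟩
          rw [this, tail_g hl (by linarith : (0:ℝ) ≤ t - x),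
            indicator_of_mem (show x ∈ Iic t from hx)]
        · have : Prod.mk x ⁻¹' S = ∅ := by
            ext y; simp only [hS, mem_preimage, mem_setOf_eq, mem_empty_iff_false, iff_false]
            rintro ⟨h1, -⟩; exact hx h1
          rw [this, indicator_of_notMem (show x ∉ Iic t by simpa using hx)]
          simp
      have hFmeas : Measurable ((Iic t).indicator
          fun x => ENNReal.ofReal (Real.exp (-(l * (t - x))))) :=
        Measurable.indicator (by fun_prop) measurableSet_Iic
      rw [lintegral_congr hsect,
        lintegral_withDensity_eq_lintegral_mul _ (g_meas l (k+1)) hFmeas]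
      have hrep : (fun x => (g l (k+1) * (Iic t).indicator
            (fun x => ENNReal.ofReal (Real.exp (-(l * (t - x)))))) x)
          = (Icc 0 t).indicator (fun x =>
            ENNReal.ofReal ((l^(k+1) * Real.exp (-(l*t)) / k.factorial) * x ^ k)) := by
        funext x
        simp only [Pi.mul_apply]
        by_cases h1 : 0 ≤ x
        · by_cases h2 : x ≤ t
          · rw [indicator_of_mem (show x ∈ Iic t from h2),
              indicator_of_mem (mem_Icc.mpr ⟨h1, h2⟩)]
            unfold g
            rw [if_pos h1, ← ENNReal.ofReal_mul (by positivity)]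
            congr 1
            have hexp : Real.exp (-(l*x)) * Real.exp (-(l*(t-x))) = Real.exp (-(l*t)) := by
              rw [← Real.exp_add]; ring_nf
            simp only [show k+1-1 = k by omega]
            rw [← hexp]
            ring
          · rw [indicator_of_notMem (show x ∉ Iic t by simpa using h2),
              indicator_of_notMem (by simp [h2] : x ∉ Icc 0 t)]
            simp
        · rw [indicator_of_notMem (by simp [h1] : x ∉ Icc 0 t)]
          unfold g
          rw [if_neg h1]
          simp
      rw [hrep, lintegral_indicator measurableSet_Icc, lint_pow k ht (by positivity)]
      congr 1
      rw [Nat.factorial_succ, mul_pow]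
      push_cast
      field_simp

end Main

/-- Let `λ > 0` and `(ξ_n)_{n ≥ 1}` be i.i.d. exponential random variables
with rate `λ` (here `ξ n` stands for `ξ_{n+1}`, so `T_{n+1} = ∑_{i ∈ range (n+1)} ξ i`).
For `t ≥ 0`, the number `N_t = #{n ≥ 1 : T_n ≤ t}` is a.s. finite and Poisson
distributed with parameter `λ t`. -/
theorem stmt8 (l : ℝ) (hl : 0 < l)
    {Ω : Type*} [MeasurableSpace Ω] (μ : Measure Ω) [IsProbabilityMeasure μ]
    (ξ : ℕ → Ω → ℝ) (hmeas : ∀ n, Measurable (ξ n))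
    (hindep : iIndepFun ξ μ)
    (hlaw : ∀ n, Measure.map (ξ n) μ =
      MeasureTheory.volume.withDensity
        (fun x => ENNReal.ofReal (if 0 ≤ x then l * Real.exp (-(l * x)) else 0)))
    (t : ℝ) (ht : 0 ≤ t) :
    (∀ᵐ ω ∂μ, {n : ℕ | ∑ i ∈ Finset.range (n + 1), ξ i ω ≤ t}.Finite) ∧
    ∀ m : ℕ,
      μ {ω | {n : ℕ | ∑ i ∈ Finset.range (n + 1), ξ i ω ≤ t}.ncard = m}
        = ENNReal.ofReal (Real.exp (-(l * t)) * (l * t) ^ m / m.factorial) := by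
  have hsum_meas : ∀ n : ℕ, Measurable (fun ω => ∑ i ∈ Finset.range n, ξ i ω) :=
    fun n => Finset.measurable_sum _ (fun i _ => hmeas i)
  set A : ℕ → Set Ω := fun m =>
    {ω | ∑ i ∈ Finset.range m, ξ i ω ≤ t ∧ t < ∑ i ∈ Finset.range (m+1), ξ i ω} with hA
  have hAmeas : ∀ m, MeasurableSet (A m) := fun m =>
    (measurableSet_le (hsum_meas m) measurable_const).inter
      (measurableSet_lt measurable_const (hsum_meas (m+1)))
  have hAq : ∀ m, μ (A m) = ENNReal.ofReal (Real.exp (-(l * t)) * (l * t) ^ m / m.factorial) :=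
    q_event hl hmeas hindep hlaw ht
  set G : Set Ω := {ω | ∀ i, 0 ≤ ξ i ω} with hG
  have hGmeas : MeasurableSet G := by
    have : G = ⋂ i, ξ i ⁻¹' (Ici 0) := by ext ω; simp [hG]
    rw [this]
    exact MeasurableSet.iInter fun i => (hmeas i) measurableSet_Ici
  have hGc : μ Gᶜ = 0 := by
    have hGc_eq : Gᶜ = ⋃ i, ξ i ⁻¹' (Iio 0) := by
      ext ω; simp [hG, not_forall, not_le]
    rw [hGc_eq]
    apply measure_iUnion_null
    intro i
    rw [← Measure.map_apply (hmeas i) measurableSet_Iio, hlaw i, expDensity_eq_g,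
      withDensity_apply _ measurableSet_Iio]
    have hz : ∀ x ∈ Iio 0, g l 1 x = 0 := by
      intro x hx
      unfold g
      rw [if_neg (not_le.mpr hx)]
      simp
    rw [setLIntegral_congr_fun measurableSet_Iio hz, lintegral_zero]
  have hmono : ∀ ω, ω ∈ G → ∀ a b : ℕ, a ≤ b →
      ∑ i ∈ Finset.range a, ξ i ω ≤ ∑ i ∈ Finset.range b, ξ i ω := by
    intro ω hω a b hab
    exact Finset.sum_le_sum_of_subset_of_nonneg (Finset.range_subset_range.mpr hab)
      (fun i _ _ => hω i)
  set B : ℕ → Set Ω := fun m => A m ∩ G with hB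
  have hBmeas : ∀ m, MeasurableSet (B m) := fun m => (hAmeas m).inter hGmeas
  have hBq : ∀ m, μ (B m) = μ (A m) := fun m => measure_inter_conull hGc
  have hdisj : Pairwise (Function.onFun Disjoint B) := by
    have key : ∀ m n, m < n → Disjoint (B m) (B n) := by
      intro m n h
      rw [Set.disjoint_left]
      rintro ω ⟨⟨-, hm2⟩, hωG⟩ ⟨⟨hn1, -⟩, -⟩
      have := hmono ω hωG (m+1) n (by omega)
      linarith
    intro m n hmn
    rcases lt_or_gt_of_ne hmn with h | h
    · exact key m n h
    · exact (key n m h).symm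
  have hU : μ (⋃ m, B m) = 1 := by
    rw [measure_iUnion hdisj hBmeas]
    have h1 : ∀ m : ℕ, μ (B m)
        = ENNReal.ofReal (Real.exp (-(l * t)) * ((l * t) ^ m / m.factorial)) := by
      intro m
      rw [hBq, hAq]
      congr 1
      ring
    simp_rw [h1]
    rw [← ENNReal.ofReal_tsum_of_nonneg (fun m => by positivity)
      ((Real.summable_pow_div_factorial (l*t)).mul_left _), tsum_mul_left]
    have hexp : ∑' m : ℕ, (l*t)^m / (m.factorial : ℝ) = Real.exp (l*t) := by
      rw [Real.exp_eq_exp_ℝ, NormedSpace.exp_eq_tsum_div]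
    rw [hexp, ← Real.exp_add]
    simp
  have hUc : μ (⋃ m, B m)ᶜ = 0 := by
    rw [measure_compl (MeasurableSet.iUnion hBmeas) (measure_ne_top μ _), hU, measure_univ]
    simp
  have hkey : ∀ m, ∀ ω ∈ B m,
      {n : ℕ | ∑ i ∈ Finset.range (n + 1), ξ i ω ≤ t} = Iio m := by
    intro m ω hω
    obtain ⟨⟨hm1, hm2⟩, hωG⟩ := hω
    ext n
    simp only [mem_setOf_eq, mem_Iio]
    constructor
    · intro hn
      by_contra hge
      push_neg at hge
      have := hmono ω hωG (m+1) (n+1) (by omega)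
      linarith
    · intro hn
      have := hmono ω hωG (n+1) m (by omega)
      linarith
  have hIio : ∀ m : ℕ, (Iio m : Set ℕ).ncard = m := by
    intro m
    rw [show (Iio m : Set ℕ) = ↑(Finset.range m) by ext; simp, Set.ncard_coe_finset,
      Finset.card_range]
  constructor
  · rw [ae_iff]
    apply measure_mono_null _ hUc
    intro ω hω
    simp only [mem_setOf_eq] at hω
    simp only [mem_compl_iff, mem_iUnion, not_exists]
    intro m hm
    exact hω (by rw [hkey m ω hm]; exact finite_Iio m)
  · intro m
    have hset : {ω | {n : ℕ | ∑ i ∈ Finset.range (n + 1), ξ i ω ≤ t}.ncard = m} ∩ (⋃ k, B k)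
        = B m := by
      ext ω
      constructor
      · rintro ⟨hm, hUm⟩
        simp only [mem_iUnion] at hUm
        obtain ⟨k, hk⟩ := hUm
        have hnk : {n : ℕ | ∑ i ∈ Finset.range (n + 1), ξ i ω ≤ t}.ncard = k := by
          rw [hkey k ω hk, hIio k]
        simp only [mem_setOf_eq] at hm
        have hkm : k = m := by rw [← hnk, hm]
        rw [← hkm]
        exact hk
      · intro hBm
        refine ⟨?_, mem_iUnion.mpr ⟨m, hBm⟩⟩
        simp only [mem_setOf_eq]
        rw [hkey m ω hBm, hIio m]
    calc μ {ω | {n : ℕ | ∑ i ∈ Finset.range (n + 1), ξ i ω ≤ t}.ncard = m}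
        = μ ({ω | {n : ℕ | ∑ i ∈ Finset.range (n + 1), ξ i ω ≤ t}.ncard = m} ∩ ⋃ k, B k) :=
          (measure_inter_conull hUc).symm
      _ = μ (B m) := by rw [hset]
      _ = _ := by rw [hBq, hAq]
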